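/- arXiv:2307.13413 — 2 statements merged into one kernel-verified Lean document; each statement's English description precedes it below -/
import Mathlib

section
/- Suppose h(x)=med(f(x),h(x),g(x)) for all x∈E. Define V⁰(x)=f(x)∧h(x) and recursively V^{n+1}(x)=med(f(x), αΠV^n(x), g(x)) if f(x)<g(x), and V^{n+1}(x)=h(x) if f(x)≥g(x). Then the pointwise limit V(x)=lim_{n→∞}V^n(x) exists, is measurable, and solves the equation: V(x)=med(f(x), αΠV(x), g(x)) for all x with f(x)<g(x), and V(x)=h(x) for all x with f(x)≥g(x). -/
open MeasureTheory ProbabilityTheory Set Filter Topology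

noncomputable section

namespace DynkinGame

variable {E : Type*} [MeasurableSpace E] {Ω : Type*} [MeasurableSpace Ω]

/-- Setup for a discrete-time Markovian Dynkin game: a time-homogeneous Markov process `X`
with Markov kernel `K` and laws `P x` (starting from `x`), for each player `i = 0, 1` an iid
sequence of `U(0,1)`-distributed randomization devices `ξ i n`, the whole family
`(ξ i n)_{i,n}` together with the trajectory of `X` being mutually independent,
and a discount factor `α ∈ (0,1)`. -/
structure Setup (E : Type*) [MeasurableSpace E] (Ω : Type*) [MeasurableSpace Ω] where
  /-- the law of the game started at `x` -/
  P : E → Measure Ω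
  isProb : ∀ x, IsProbabilityMeasure (P x)
  /-- the state process -/
  X : ℕ → Ω → E
  measX : ∀ n, Measurable (X n)
  /-- the randomization devices of the two players -/
  ξ : Fin 2 → ℕ → Ω → ℝ
  measξ : ∀ i n, Measurable (ξ i n)
  /-- the Markov kernel of `X` -/
  K : Kernel E E
  isMarkovKernel : IsMarkovKernel K
  /-- the discount factor -/
  α : ℝ
  α_pos : 0 < α
  α_lt_one : α < 1
  /-- `X₀ = x` holds `P x`-a.s. -/
  init : ∀ x, ∀ᵐ ω ∂ P x, X 0 ω = x
  /-- the Markov property of `X` with transition kernel `K`, expressed through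
  finite-dimensional distributions tested against bounded measurable functions -/
  markov : ∀ (x : E) (n : ℕ) (φ : (Fin (n + 1) → E) → ℝ) (F : E → ℝ),
    Measurable φ → Measurable F → (∃ C, ∀ v, |φ v| ≤ C) → (∃ C, ∀ y, |F y| ≤ C) →
    ∫ ω, φ (fun k => X k ω) * F (X (n + 1) ω) ∂ P x
      = ∫ ω, φ (fun k => X k ω) * (∫ y, F y ∂ K (X n ω)) ∂ P x
  /-- each `ξ i n` is uniformly distributed on `[0,1]` -/
  unif : ∀ (x : E) (i : Fin 2) (n : ℕ),
    Measure.map (ξ i n) (P x) = volume.restrict (Icc (0 : ℝ) 1)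
  /-- the random variables `ξ i n` (`i = 0,1`, `n ∈ ℕ`) and the trajectory of `X`
  are mutually independent -/
  indep : ∀ x : E, iIndep
    (fun j : Option (Fin 2 × ℕ) =>
      match j with
      | none => MeasurableSpace.comap (fun ω k => X k ω) inferInstance
      | some (i, n) => MeasurableSpace.comap (ξ i n) inferInstance)
    (P x)

/-- The filtration `σ(X₀,…,Xₙ, ξ₀⁽ⁱ⁾,…,ξₙ⁽ⁱ⁾)` of player `i`. -/
def Setup.filt (S : Setup E Ω) (i : Fin 2) (n : ℕ) : MeasurableSpace Ω :=
  (⨆ k ∈ Iic n, MeasurableSpace.comap (S.X k) inferInstance) ⊔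
    ⨆ k ∈ Iic n, MeasurableSpace.comap (S.ξ i k) inferInstance

/-- The admissible stopping times `𝒯ᵢ` of player `i`: stopping times with respect to the
filtration `σ(X₀,…,Xₙ, ξ₀⁽ⁱ⁾,…,ξₙ⁽ⁱ⁾)`, with values in `ℕ∞`. -/
def Setup.Adm (S : Setup E Ω) (i : Fin 2) : Set (Ω → ℕ∞) :=
  {τ | ∀ n : ℕ, MeasurableSet[S.filt i n] {ω | τ ω ≤ (n : ℕ∞)}}

/-- The Markovian randomized stopping time `τᵖ = inf {n : p (Xₙ) ≥ ξₙ⁽ⁱ⁾}` (with `inf ∅ = ∞`). -/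
def Setup.mrst (S : Setup E Ω) (i : Fin 2) (p : E → ℝ) (ω : Ω) : ℕ∞ :=
  ⨅ n ∈ {n : ℕ | S.ξ i n ω ≤ p (S.X n ω)}, (n : ℕ∞)

/-- The discounted payoff `α ^ τ • φ (X_τ)`, read as `0` on `{τ = ∞}`. -/
def Setup.disc (S : Setup E Ω) (φ : E → ℝ) (τ : Ω → ℕ∞) (ω : Ω) : ℝ :=
  if τ ω = ⊤ then 0 else S.α ^ (τ ω).toNat * φ (S.X (τ ω).toNat ω)

/-- Pathwise reward of a player using stopping time `σ` against the opponent's `τ`: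
`α^σ f(X_σ) 1{σ<τ} + α^τ g(X_τ) 1{τ<σ} + α^σ h(X_σ) 1{σ=τ<∞}`. -/
def Setup.payoff (S : Setup E Ω) (f g h : E → ℝ) (σ τ : Ω → ℕ∞) (ω : Ω) : ℝ :=
  (if σ ω < τ ω then S.disc f σ ω else 0) +
    (if τ ω < σ ω then S.disc g τ ω else 0) +
      (if σ ω = τ ω then S.disc h σ ω else 0)

/-- Expected reward `J(x; σ, τ)` of the player using stopping time `σ` against `τ`. -/
def Setup.J (S : Setup E Ω) (f g h : E → ℝ) (σ τ : Ω → ℕ∞) (x : E) : ℝ :=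
  ∫ ω, S.payoff f g h σ τ ω ∂ S.P x

/-- A Markovian (randomized) stopping strategy: a measurable function `E → [0,1]`. -/
def IsStrategy (p : E → ℝ) : Prop := Measurable p ∧ ∀ x, p x ∈ Icc (0 : ℝ) 1

/-- A pure stopping strategy. -/
def IsPure (p : E → ℝ) : Prop := ∀ x, p x = 0 ∨ p x = 1

/-- `ΠV(x) = ∫ V dΠ(x,·)`, the integral with respect to the transition kernel. -/
def Setup.kint (S : Setup E Ω) (V : E → ℝ) (x : E) : ℝ := ∫ y, V y ∂ S.K x

/-- `E_x [sup_n φ(X̃ₙ)] < ∞` for every `x`, where `X̃` is the process `X` killed at each step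
independently with probability `1 - α` (and `φ` vanishes at the cemetery state); equivalently,
with an independent geometric killing time `T`,
`E_x[sup_{n ≤ T} φ(Xₙ) ∨ 0] = ∑ₖ (1-α) αᵏ E_x[max_{n ≤ k} φ(Xₙ) ∨ 0] < ∞`. -/
def Setup.KilledSupFin (S : Setup E Ω) (φ : E → ℝ) : Prop :=
  ∀ x : E,
    (∑' k : ℕ, ENNReal.ofReal ((1 - S.α) * S.α ^ k) *
      ∫⁻ ω, (Finset.range (k + 1)).sup (fun n => ENNReal.ofReal (φ (S.X n ω))) ∂ S.P x) < ⊤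

/-- Standing integrability assumption: `sup_n |φ(X̃ₙ)| ∈ L¹(P_x)` for every `x`. -/
def Setup.KilledSupInt (S : Setup E Ω) (φ : E → ℝ) : Prop :=
  S.KilledSupFin fun x => |φ x|

/-- `(τ₁, τ₂)` is a Nash equilibrium for `x`: each player's stopping time attains the
supremum of the expected reward over admissible stopping times, the opponent's being fixed. -/
def Setup.IsNashAt (S : Setup E Ω) (f g h : Fin 2 → E → ℝ) (τ₁ τ₂ : Ω → ℕ∞) (x : E) : Prop :=
  (S.J (f 0) (g 0) (h 0) τ₁ τ₂ x = ⨆ σ : S.Adm 0, S.J (f 0) (g 0) (h 0) σ.1 τ₂ x) ∧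
    (S.J (f 1) (g 1) (h 1) τ₂ τ₁ x = ⨆ σ : S.Adm 1, S.J (f 1) (g 1) (h 1) σ.1 τ₁ x)

/-- `(p 0, p 1)` is a global Markovian randomized equilibrium: the associated pair of
Markovian randomized stopping times is a Nash equilibrium for every `x ∈ E`. -/
def Setup.IsGlobalEq (S : Setup E Ω) (f g h : Fin 2 → E → ℝ) (p : Fin 2 → E → ℝ) : Prop :=
  IsStrategy (p 0) ∧ IsStrategy (p 1) ∧
    ∀ x : E, S.IsNashAt f g h (S.mrst 0 (p 0)) (S.mrst 1 (p 1)) x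

/-- Zero-sum game: `(p₁, p₂)` is a global Markovian randomized equilibrium when for every `x`,
`τ^{p₁}` maximizes `J₁(x; ·, τ^{p₂})` over `𝒯₁` and `τ^{p₂}` minimizes `J₁(x; τ^{p₁}, ·)`
over `𝒯₂`. -/
def Setup.IsZSEq (S : Setup E Ω) (f g h : E → ℝ) (p₁ p₂ : E → ℝ) : Prop :=
  IsStrategy p₁ ∧ IsStrategy p₂ ∧
    ∀ x : E,
      (S.J f g h (S.mrst 0 p₁) (S.mrst 1 p₂) x =
        ⨆ σ : S.Adm 0, S.J f g h σ.1 (S.mrst 1 p₂) x) ∧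
      (S.J f g h (S.mrst 0 p₁) (S.mrst 1 p₂) x =
        ⨅ σ : S.Adm 1, S.J f g h (S.mrst 0 p₁) σ.1 x)


/-- The middle value of three reals: `med a b c = min (max a b) (min (max a c) (max b c))`. -/
def med (a b c : ℝ) : ℝ := min (min (max a b) (max a c)) (max b c)

/-- `V` solves the fixed point equation `V(x) = med(f(x), αΠV(x), g(x))` when `f(x) < g(x)`
and `V(x) = h(x)` when `f(x) ≥ g(x)`. -/
def Setup.SolvesMed (S : Setup E Ω) (f g h V : E → ℝ) : Prop :=
  ∀ x : E, (f x < g x → V x = med (f x) (S.α * S.kint V x) (g x)) ∧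
    (g x ≤ f x → V x = h x)

/-- The iteration `V⁰ = f ∧ h`, `Vⁿ⁺¹(x) = med(f(x), αΠVⁿ(x), g(x))` if `f(x) < g(x)` and
`Vⁿ⁺¹(x) = h(x)` if `f(x) ≥ g(x)`. -/
def medSeq (S : Setup E Ω) (f g h : E → ℝ) : ℕ → E → ℝ
  | 0 => fun x => min (f x) (h x)
  | n + 1 => fun x =>
      if f x < g x then med (f x) (S.α * S.kint (medSeq S f g h n) x) (g x) else h x


section Aux

lemma med_eq_clamp {a b c : ℝ} (hac : a ≤ c) : med a b c = max a (min b c) := by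
  simp only [med, min_def, max_def]
  split_ifs <;> linarith

lemma measurable_med {u v w : E → ℝ}
    (hu : Measurable u) (hv : Measurable v) (hw : Measurable w) :
    Measurable fun x => med (u x) (v x) (w x) :=
  ((hu.max hv).min (hu.max hw)).min (hv.max hw)

lemma le_med {a b c : ℝ} (hac : a ≤ c) : a ≤ med a b c := by
  rw [med_eq_clamp hac]; exact le_max_left _ _

lemma med_le {a b c : ℝ} (hac : a ≤ c) : med a b c ≤ c := by
  rw [med_eq_clamp hac]; exact max_le hac (min_le_right _ _)

lemma med_mono {a b b' c : ℝ} (hac : a ≤ c) (hb : b ≤ b') : med a b c ≤ med a b' c := by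
  rw [med_eq_clamp hac, med_eq_clamp hac]
  exact max_le_max le_rfl (min_le_min hb le_rfl)

lemma iSup_ofReal_min (a : ℝ) :
    ⨆ m : ℕ, ENNReal.ofReal (min a m) = ENNReal.ofReal a := by
  apply le_antisymm
  · exact iSup_le fun m => ENNReal.ofReal_le_ofReal (min_le_left _ _)
  · obtain ⟨m, hm⟩ := exists_nat_ge a
    calc ENNReal.ofReal a = ENNReal.ofReal (min a m) := by rw [min_eq_left hm]
      _ ≤ _ := le_iSup (fun m : ℕ => ENNReal.ofReal (min a (m : ℝ))) m

/-- Measurability of the kernel integral. -/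
lemma Setup.measurable_kint (S : Setup E Ω) {V : E → ℝ} (hV : Measurable V) :
    Measurable (S.kint V) := by
  haveI := S.isMarkovKernel
  have : StronglyMeasurable fun x => ∫ y, (fun p : E × E => V p.2) (x, y) ∂ S.K x :=
    StronglyMeasurable.integral_kernel_prod_right'
      ((hV.comp measurable_snd).stronglyMeasurable)
  exact this.measurable

/-- The standing assumption implies `φ(X₁) ∈ L¹`. -/
lemma Setup.lint_X1_lt_top (S : Setup E Ω) {φ : E → ℝ} (hI : S.KilledSupInt φ) (x : E) :
    ∫⁻ ω, ENNReal.ofReal |φ (S.X 1 ω)| ∂ S.P x < ⊤ := by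
  have h := hI x
  have h1 : ENNReal.ofReal ((1 - S.α) * S.α ^ 1) *
      ∫⁻ ω, (Finset.range 2).sup (fun n => ENNReal.ofReal (|φ (S.X n ω)|)) ∂ S.P x < ⊤ :=
    lt_of_le_of_lt (ENNReal.le_tsum 1) h
  have hc : ENNReal.ofReal ((1 - S.α) * S.α ^ 1) ≠ 0 := by
    rw [Ne, ENNReal.ofReal_eq_zero, not_le]
    nlinarith [S.α_pos, S.α_lt_one]
  have h2 : ∫⁻ ω, (Finset.range 2).sup (fun n => ENNReal.ofReal (|φ (S.X n ω)|)) ∂ S.P x < ⊤ :=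
    ENNReal.lt_top_of_mul_ne_top_right h1.ne hc
  refine lt_of_le_of_lt (lintegral_mono fun ω => ?_) h2
  exact Finset.le_sup (f := fun n => ENNReal.ofReal (|φ (S.X n ω)|)) (by simp : 1 ∈ Finset.range 2)

/-- Integrability with respect to the kernel. -/
lemma Setup.integrable_kernel (S : Setup E Ω) {φ : E → ℝ} (hm : Measurable φ)
    (hI : S.KilledSupInt φ) (x : E) : Integrable φ (S.K x) := by
  haveI := S.isMarkovKernel
  haveI := S.isProb x
  set M := ∫⁻ ω, ENNReal.ofReal |φ (S.X 1 ω)| ∂ S.P x with hM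
  have hMlt : M < ⊤ := S.lint_X1_lt_top hI x
  have key : ∀ m : ℕ, ∫⁻ y, ENNReal.ofReal (min |φ y| m) ∂ S.K x ≤ M := by
    intro m
    set F : E → ℝ := fun y => min |φ y| m with hF
    have hFm : Measurable F := hm.abs.min measurable_const
    have hF0 : ∀ y, 0 ≤ F y := fun y => le_min (abs_nonneg _) m.cast_nonneg
    have hFb : ∀ y, |F y| ≤ (m : ℝ) := fun y => by
      rw [abs_of_nonneg (hF0 y)]; exact min_le_right _ _
    have hmar := S.markov x 0 (fun _ => 1) F measurable_const hFm
      ⟨1, fun v => by simp⟩ ⟨m, hFb⟩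
    simp only [one_mul] at hmar
    have h0 : ∫ ω, (∫ y, F y ∂ S.K (S.X 0 ω)) ∂ S.P x = ∫ y, F y ∂ S.K x := by
      have hae : ∀ᵐ ω ∂ S.P x, (∫ y, F y ∂ S.K (S.X 0 ω)) = ∫ y, F y ∂ S.K x := by
        filter_upwards [S.init x] with ω hω; rw [hω]
      rw [integral_congr_ae hae, integral_const]; simp
    have heq : ∫ y, F y ∂ S.K x = ∫ ω, F (S.X 1 ω) ∂ S.P x := by rw [hmar, h0]
    have hintK : Integrable F (S.K x) :=
      Integrable.mono' (integrable_const (m : ℝ)) hFm.aestronglyMeasurable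
        (ae_of_all _ fun y => by rw [Real.norm_eq_abs]; exact hFb y)
    have hintP : Integrable (fun ω => F (S.X 1 ω)) (S.P x) :=
      Integrable.mono' (integrable_const (m : ℝ))
        ((hFm.comp (S.measX 1)).aestronglyMeasurable)
        (ae_of_all _ fun ω => by rw [Real.norm_eq_abs]; exact hFb _)
    calc ∫⁻ y, ENNReal.ofReal (F y) ∂ S.K x
        = ENNReal.ofReal (∫ y, F y ∂ S.K x) :=
          (ofReal_integral_eq_lintegral_ofReal hintK (ae_of_all _ hF0)).symm
      _ = ENNReal.ofReal (∫ ω, F (S.X 1 ω) ∂ S.P x) := by rw [heq]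
      _ = ∫⁻ ω, ENNReal.ofReal (F (S.X 1 ω)) ∂ S.P x :=
          ofReal_integral_eq_lintegral_ofReal hintP (ae_of_all _ fun ω => hF0 _)
      _ ≤ M := lintegral_mono fun ω => ENNReal.ofReal_le_ofReal (min_le_left _ _)
  have hsup : ∫⁻ y, ENNReal.ofReal |φ y| ∂ S.K x ≤ M := by
    have hmono : Monotone fun (m : ℕ) (y : E) => ENNReal.ofReal (min |φ y| m) := by
      intro m m' hmm y
      exact ENNReal.ofReal_le_ofReal (min_le_min le_rfl (Nat.cast_le.2 hmm))
    have hlim := lintegral_iSup (μ := S.K x)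
      (fun m => ((hm.abs.min measurable_const).ennreal_ofReal)) hmono
    calc ∫⁻ y, ENNReal.ofReal |φ y| ∂ S.K x
        = ∫⁻ y, ⨆ m : ℕ, ENNReal.ofReal (min |φ y| m) ∂ S.K x := by
          simp_rw [iSup_ofReal_min]
      _ = ⨆ m : ℕ, ∫⁻ y, ENNReal.ofReal (min |φ y| m) ∂ S.K x := hlim
      _ ≤ M := iSup_le key
  refine ⟨hm.aestronglyMeasurable, ?_⟩
  show (∫⁻ y, (‖φ y‖₊ : ENNReal) ∂ S.K x) < ⊤
  calc ∫⁻ y, (‖φ y‖₊ : ENNReal) ∂ S.K x = ∫⁻ y, ENNReal.ofReal |φ y| ∂ S.K x := by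
        simp_rw [← enorm_eq_nnnorm, Real.enorm_eq_ofReal_abs]
    _ ≤ M := hsup
    _ < ⊤ := hMlt

end Aux

/-- If `h = med(f, h, g)` pointwise, the iteration `Vⁿ` converges pointwise to a measurable
function `V` solving the zero-sum Wald–Bellman equation. -/
theorem statement8 (S : Setup E Ω) (f g h : E → ℝ)
    (hmf : Measurable f) (hmg : Measurable g) (hmh : Measurable h)
    (hIf : S.KilledSupInt f) (hIg : S.KilledSupInt g) (hIh : S.KilledSupInt h)
    (hmed : ∀ x : E, h x = med (f x) (h x) (g x)) :
    ∃ V : E → ℝ, Measurable V ∧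
      (∀ x : E, Tendsto (fun n => medSeq S f g h n x) atTop (𝓝 (V x))) ∧
      S.SolvesMed f g h V := by
  haveI := S.isMarkovKernel
  set W : ℕ → E → ℝ := medSeq S f g h with hW
  set lo : E → ℝ := fun x => min (f x) (min (g x) (h x)) with hlo
  set hi : E → ℝ := fun x => max (g x) (h x) with hhi
  have hWsucc : ∀ (n : ℕ) (x : E), W (n + 1) x =
      if f x < g x then med (f x) (S.α * S.kint (W n) x) (g x) else h x := fun n x => rfl
  have bdd : ∀ (n : ℕ) (x : E), lo x ≤ W n x ∧ W n x ≤ hi x := by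
    intro n
    induction n with
    | zero =>
      intro x
      refine ⟨le_min (min_le_left _ _) ((min_le_right _ _).trans (min_le_right _ _)), ?_⟩
      exact (min_le_right _ _).trans (le_max_right _ _)
    | succ n ih =>
      intro x
      rw [hWsucc]
      split_ifs with hfg
      · exact ⟨(min_le_left _ _).trans (le_med hfg.le),
          (med_le hfg.le).trans (le_max_left _ _)⟩
      · exact ⟨((min_le_right _ _).trans (min_le_right _ _)), le_max_right _ _⟩
  have measW : ∀ n : ℕ, Measurable (W n) := by
    intro n
    induction n with
    | zero => exact hmf.min hmh
    | succ n ih =>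
      have hmed' : Measurable fun x => med (f x) (S.α * S.kint (W n) x) (g x) :=
        measurable_med hmf (measurable_const.mul (S.measurable_kint ih)) hmg
      exact Measurable.ite (measurableSet_lt hmf hmg) hmed' hmh
  have intf := fun x => S.integrable_kernel hmf hIf x
  have intg := fun x => S.integrable_kernel hmg hIg x
  have inth := fun x => S.integrable_kernel hmh hIh x
  have intlo : ∀ x, Integrable lo (S.K x) := fun x => (intf x).inf ((intg x).inf (inth x))
  have inthi : ∀ x, Integrable hi (S.K x) := fun x => (intg x).sup (inth x)
  set D : E → ℝ := fun y => |lo y| + |hi y| with hD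
  have intD : ∀ x, Integrable D (S.K x) := fun x => ((intlo x).abs).add ((inthi x).abs)
  have hbd : ∀ (n : ℕ) (y : E), ‖W n y‖ ≤ D y := by
    intro n y
    rw [Real.norm_eq_abs, abs_le]
    obtain ⟨h1, h2⟩ := bdd n y
    constructor
    · have := neg_abs_le (lo y); have := abs_nonneg (hi y); simp only [hD]; linarith
    · have := le_abs_self (hi y); have := abs_nonneg (lo y); simp only [hD]; linarith
  have intW : ∀ (n : ℕ) (x : E), Integrable (W n) (S.K x) := fun n x =>
    Integrable.mono' (intD x) (measW n).aestronglyMeasurable (ae_of_all _ (hbd n))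
  have monoW : ∀ (n : ℕ) (x : E), W n x ≤ W (n + 1) x := by
    intro n
    induction n with
    | zero =>
      intro x
      rw [hWsucc]
      split_ifs with hfg
      · exact (min_le_left _ _).trans (le_med hfg.le)
      · exact min_le_right _ _
    | succ n ih =>
      intro x
      rw [hWsucc, hWsucc]
      split_ifs with hfg
      · refine med_mono hfg.le (mul_le_mul_of_nonneg_left ?_ S.α_pos.le)
        exact integral_mono (intW n x) (intW (n + 1) x) ih
      · exact le_rfl
  have hmono' : ∀ x, Monotone fun n => W n x := fun x =>
    monotone_nat_of_le_succ fun n => monoW n x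
  have hbdd : ∀ x, BddAbove (range fun n => W n x) := fun x =>
    ⟨hi x, by rintro _ ⟨n, rfl⟩; exact (bdd n x).2⟩
  set V : E → ℝ := fun x => ⨆ n, W n x with hV
  have htend : ∀ x, Tendsto (fun n => W n x) atTop (𝓝 (V x)) := fun x =>
    tendsto_atTop_ciSup (hmono' x) (hbdd x)
  have measV : Measurable V := measurable_of_tendsto_metrizable measW (tendsto_pi_nhds.2 htend)
  have bddV : ∀ y, lo y ≤ V y ∧ V y ≤ hi y := fun y =>
    ⟨(bdd 0 y).1.trans (le_ciSup (hbdd y) 0), ciSup_le fun n => (bdd n y).2⟩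
  have hbdV : ∀ y, ‖V y‖ ≤ D y := by
    intro y
    rw [Real.norm_eq_abs, abs_le]
    obtain ⟨h1, h2⟩ := bddV y
    constructor
    · have := neg_abs_le (lo y); have := abs_nonneg (hi y); simp only [hD]; linarith
    · have := le_abs_self (hi y); have := abs_nonneg (lo y); simp only [hD]; linarith
  have hkint : ∀ x, Tendsto (fun n => S.kint (W n) x) atTop (𝓝 (S.kint V x)) := fun x =>
    tendsto_integral_of_dominated_convergence D (fun n => (measW n).aestronglyMeasurable)
      (intD x) (fun n => ae_of_all _ (hbd n)) (ae_of_all _ fun y => htend y)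
  refine ⟨V, measV, htend, fun x => ⟨?_, ?_⟩⟩
  · intro hfg
    have h1 : Tendsto (fun n => W (n + 1) x) atTop (𝓝 (V x)) :=
      (htend x).comp (tendsto_add_atTop_nat 1)
    have h2 : Tendsto (fun n => W (n + 1) x) atTop
        (𝓝 (med (f x) (S.α * S.kint V x) (g x))) := by
      have hm : Tendsto (fun n => S.α * S.kint (W n) x) atTop (𝓝 (S.α * S.kint V x)) :=
        (hkint x).const_mul S.α
      have ht : Tendsto (fun n => max (f x) (min (S.α * S.kint (W n) x) (g x))) atTop
          (𝓝 (max (f x) (min (S.α * S.kint V x) (g x)))) :=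
        tendsto_const_nhds.max (hm.min tendsto_const_nhds)
      rw [med_eq_clamp hfg.le]
      refine ht.congr fun n => ?_
      rw [hWsucc, if_pos hfg, med_eq_clamp hfg.le]
    exact tendsto_nhds_unique h1 h2
  · intro hgf
    have h1 : Tendsto (fun n => W (n + 1) x) atTop (𝓝 (V x)) :=
      (htend x).comp (tendsto_add_atTop_nat 1)
    have h2 : Tendsto (fun n => W (n + 1) x) atTop (𝓝 (h x)) := by
      refine tendsto_const_nhds.congr fun n => ?_
      rw [hWsucc, if_neg (not_lt.2 hgf)]
    exact tendsto_nhds_unique h1 h2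

end DynkinGame
end
end

section
/- In the zero-sum game, define M₁={x∈E : max(f(x),g(x))<h(x)} and M₂={x∈E : h(x)<min(f(x),g(x))}, let τ_{M_i}=inf{n≥0 : X_n∉M_i}, and set k₁(x)=f(x) for x∈M₁, k₁(x)=min(f(x),h(x)) for x∉M₁, k₂(x)=g(x) for x∈M₂, k₂(x)=max(g(x),h(x)) for x∉M₂. Define V_{M₁}(x)=sup{E_x[α^τ k₁(X_τ)] : τ∈𝒯₁, τ≤τ_{M₁}} for x∈M₁ and V_{M₂}(x)=inf{E_x[α^τ k₂(X_τ)] : τ∈𝒯₂, τ≤τ_{M₂}} for x∈M₂. (A) If V_{M₁}(x₀)>max(f(x₀),g(x₀)) for some x₀∈M₁, then no pure global Markovian equilibrium exists. (B) If V_{M₂}(x₀)<min(f(x₀),g(x₀)) for some x₀∈M₂, then no pure global Markovian equilibrium exists. -/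
open MeasureTheory ProbabilityTheory Set Filter Topology

noncomputable section

namespace DynkinGame

variable {E : Type*} [MeasurableSpace E] {Ω : Type*} [MeasurableSpace Ω]

/-- The first exit time `τ_M = inf {n ≥ 0 : Xₙ ∉ M}` from a set `M ⊆ E`. -/
def Setup.exitTime (S : Setup E Ω) (M : Set E) (ω : Ω) : ℕ∞ :=
  ⨅ n ∈ {n : ℕ | S.X n ω ∉ M}, (n : ℕ∞)

/-- The value `sup {E_x[α^τ k(X_τ)] : τ ∈ 𝒯ᵢ, τ ≤ τ_M}` of the stopping problem for the
maximizer, constrained by the exit time from `M`. -/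
def Setup.conSup (S : Setup E Ω) (i : Fin 2) (k : E → ℝ) (M : Set E) (x : E) : ℝ :=
  ⨆ τ : {τ : Ω → ℕ∞ // τ ∈ S.Adm i ∧ ∀ ω, τ ω ≤ S.exitTime M ω},
    ∫ ω, S.disc k τ.1 ω ∂ S.P x

/-- The value `inf {E_x[α^τ k(X_τ)] : τ ∈ 𝒯ᵢ, τ ≤ τ_M}` of the stopping problem for the
minimizer, constrained by the exit time from `M`. -/
def Setup.conInf (S : Setup E Ω) (i : Fin 2) (k : E → ℝ) (M : Set E) (x : E) : ℝ :=
  ⨅ τ : {τ : Ω → ℕ∞ // τ ∈ S.Adm i ∧ ∀ ω, τ ω ≤ S.exitTime M ω},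
    ∫ ω, S.disc k τ.1 ω ∂ S.P x


/-! ### Auxiliary lemmas on `ℕ∞`-valued infima over sets of naturals -/

section NatInf

private def NInf (A : Set ℕ) : ℕ∞ := ⨅ n ∈ A, (n : ℕ∞)

private lemma NInf_le {A : Set ℕ} {m : ℕ} (h : m ∈ A) : NInf A ≤ m := iInf₂_le m h

private lemma NInf_le_iff {A : Set ℕ} {m : ℕ} : NInf A ≤ (m : ℕ∞) ↔ ∃ k ∈ A, k ≤ m := by
  constructor
  · intro hle
    by_contra hc
    push_neg at hc
    have h1 : ((m : ℕ∞) + 1) ≤ NInf A := by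
      refine le_iInf₂ fun n hn => ?_
      have : m + 1 ≤ n := hc n hn
      exact_mod_cast Nat.cast_le.mpr this
    have h2 : (m : ℕ∞) + 1 ≤ (m : ℕ∞) := h1.trans hle
    exact lt_irrefl _ ((ENat.add_one_le_iff (by simp)).mp h2)
  · rintro ⟨k, hk, hkm⟩
    exact (NInf_le hk).trans (by exact_mod_cast hkm)

private lemma NInf_eq_coe {A : Set ℕ} {m : ℕ} (h : NInf A = (m : ℕ∞)) : m ∈ A := by
  obtain ⟨k, hk, hkm⟩ := NInf_le_iff.mp h.le
  have : (m : ℕ∞) ≤ k := h ▸ NInf_le hk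
  have : m ≤ k := by exact_mod_cast this
  have : k = m := le_antisymm hkm this
  exact this ▸ hk

private lemma NInf_eq_top {A : Set ℕ} (h : ∀ n, n ∉ A) : NInf A = ⊤ :=
  le_antisymm le_top (le_iInf₂ fun n hn => absurd hn (h n))

private lemma NInf_mono {A B : Set ℕ} (h : A ⊆ B) : NInf B ≤ NInf A :=
  le_iInf₂ fun n hn => NInf_le (h hn)

private lemma NInf_eq_zero {A : Set ℕ} (h : 0 ∈ A) : NInf A = 0 :=
  le_antisymm (by exact_mod_cast NInf_le h) zero_le

private lemma NInf_pos {A : Set ℕ} (h : 0 ∉ A) : 0 < NInf A :=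
  pos_iff_ne_zero.mpr fun h0 => h (NInf_eq_coe (by simpa using h0))

end NatInf

/-! ### Measurability infrastructure -/

section Meas

variable (S : Setup E Ω)

private lemma mrst_def (i : Fin 2) (p : E → ℝ) (ω : Ω) :
    S.mrst i p ω = NInf {n | S.ξ i n ω ≤ p (S.X n ω)} := rfl

private lemma exitTime_def (M : Set E) (ω : Ω) :
    S.exitTime M ω = NInf {n | S.X n ω ∉ M} := rfl

private lemma filt_le (i : Fin 2) (n : ℕ) : S.filt i n ≤ (inferInstance : MeasurableSpace Ω) :=
  sup_le (iSup₂_le fun k _ => (S.measX k).comap_le) (iSup₂_le fun k _ => (S.measξ i k).comap_le)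

private lemma adm_le_sets {i : Fin 2} {τ : Ω → ℕ∞} (hτ : τ ∈ S.Adm i) (n : ℕ) :
    MeasurableSet {ω | τ ω ≤ (n : ℕ∞)} := by
  have h2 : MeasurableSet[S.filt i n] {ω | τ ω ≤ (n : ℕ∞)} := hτ n
  exact filt_le S i n _ h2

private lemma const_mem_adm (i : Fin 2) (c : ℕ∞) : (fun _ : Ω => c) ∈ S.Adm i := by
  intro n
  by_cases hc : c ≤ (n : ℕ∞)
  · have : {ω : Ω | c ≤ (n : ℕ∞)} = Set.univ := Set.eq_univ_of_forall fun ω => hc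
    rw [this]; exact @MeasurableSet.univ Ω (S.filt i n)
  · have : {ω : Ω | c ≤ (n : ℕ∞)} = ∅ := Set.eq_empty_iff_forall_notMem.mpr fun ω hω => hc hω
    rw [this]; exact @MeasurableSet.empty Ω (S.filt i n)

private lemma fiber_of_le_sets {τ : Ω → ℕ∞} (hle : ∀ n : ℕ, MeasurableSet {ω | τ ω ≤ (n : ℕ∞)})
    (n : ℕ) : MeasurableSet {ω | τ ω = (n : ℕ∞)} := by
  cases n with
  | zero =>
      have : {ω | τ ω = ((0 : ℕ) : ℕ∞)} = {ω | τ ω ≤ ((0 : ℕ) : ℕ∞)} := by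
        ext ω
        constructor
        · exact fun hh => le_of_eq hh
        · intro hh
          exact le_antisymm hh (by exact_mod_cast (zero_le : (0 : ℕ∞) ≤ τ ω))
      rw [this]; exact hle 0
  | succ m =>
      have : {ω | τ ω = ((m + 1 : ℕ) : ℕ∞)} =
          {ω | τ ω ≤ ((m + 1 : ℕ) : ℕ∞)} \ {ω | τ ω ≤ ((m : ℕ) : ℕ∞)} := by
        ext ω
        simp only [Set.mem_setOf_eq, Set.mem_diff]
        constructor
        · intro hτω
          refine ⟨hτω.le, ?_⟩
          rw [hτω]
          intro hcon
          have : m + 1 ≤ m := by exact_mod_cast hcon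
          omega
        · rintro ⟨h1, h2⟩
          have hlt : ((m : ℕ)  : ℕ∞) < τ ω := lt_of_not_ge h2
          have : ((m : ℕ) : ℕ∞) + 1 ≤ τ ω := (ENat.add_one_le_iff (by simp)).mpr hlt
          refine le_antisymm h1 ?_
          exact_mod_cast this
      rw [this]; exact (hle (m + 1)).diff (hle m)

private lemma mrst_le_sets {p : E → ℝ} (hp : Measurable p) (i : Fin 2) (n : ℕ) :
    MeasurableSet {ω | S.mrst i p ω ≤ (n : ℕ∞)} := by
  have : {ω | S.mrst i p ω ≤ (n : ℕ∞)} =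
      ⋃ m, ⋃ _ : m ≤ n, {ω | S.ξ i m ω ≤ p (S.X m ω)} := by
    ext ω
    simp only [Set.mem_setOf_eq, Set.mem_iUnion, mrst_def, NInf_le_iff]
    constructor
    · rintro ⟨k, hk, hkn⟩; exact ⟨k, hkn, hk⟩
    · rintro ⟨k, hkn, hk⟩; exact ⟨k, hk, hkn⟩
  rw [this]
  exact MeasurableSet.iUnion fun m => MeasurableSet.iUnion fun _ =>
    measurableSet_le (S.measξ i m) (hp.comp (S.measX m))

private lemma meas_disc {k : E → ℝ} (hk : Measurable k) {τ : Ω → ℕ∞}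
    (hτ : ∀ n : ℕ, MeasurableSet {ω | τ ω ≤ (n : ℕ∞)}) : Measurable (S.disc k τ) := by
  classical
  have hfib := fiber_of_le_sets hτ
  set u : ℕ → Ω → ℝ := fun N ω =>
    ∑ n ∈ Finset.range N, ({ω | τ ω = (n : ℕ∞)}).indicator (fun ω => S.α ^ n * k (S.X n ω)) ω
    with hu
  have hmeas : ∀ N, Measurable (u N) := by
    intro N
    apply Finset.measurable_sum
    intro n _
    exact Measurable.indicator (measurable_const.mul (hk.comp (S.measX n))) (hfib n)
  refine measurable_of_tendsto_metrizable hmeas ?_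
  rw [tendsto_pi_nhds]
  intro ω
  rcases eq_or_ne (τ ω) ⊤ with htop | hne
  · have : ∀ N, u N ω = 0 := by
      intro N
      rw [hu]
      refine Finset.sum_eq_zero fun n _ => ?_
      rw [Set.indicator_of_notMem]
      simp only [Set.mem_setOf_eq, htop]
      exact fun hc => by simp at hc
    simp only [this, Setup.disc, if_pos htop]
    exact tendsto_const_nhds
  · set n₀ := (τ ω).toNat
    have hn₀ : ((n₀ : ℕ) : ℕ∞) = τ ω := ENat.coe_toNat hne
    have hval : ∀ N, n₀ < N → u N ω = S.α ^ n₀ * k (S.X n₀ ω) := by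
      intro N hN
      have hsum : u N ω =
          ({ω | τ ω = ((n₀ : ℕ) : ℕ∞)}).indicator (fun ω => S.α ^ n₀ * k (S.X n₀ ω)) ω :=
        Finset.sum_eq_single n₀
          (fun b _ hb => by
            refine Set.indicator_of_notMem (fun hc => hb ?_) _
            have hcb : τ ω = (b : ℕ∞) := hc
            rw [← hn₀] at hcb
            exact Nat.cast_inj.mp hcb.symm)
          (fun hc => absurd (Finset.mem_range.mpr hN) hc)
      rw [hsum, Set.indicator_of_mem]
      exact hn₀.symm
    have hdisc : S.disc k τ ω = S.α ^ n₀ * k (S.X n₀ ω) := by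
      rw [Setup.disc, ← hn₀]
      split
      next hcc => exact absurd hcc (ENat.coe_ne_top n₀)
      next => rw [ENat.toNat_coe]
    rw [hdisc]
    refine tendsto_atTop_of_eventually_const (i₀ := n₀ + 1) fun N hN => hval N (by omega)

private lemma meas_lt_set {σ τ : Ω → ℕ∞} (hσ : ∀ n : ℕ, MeasurableSet {ω | σ ω ≤ (n : ℕ∞)})
    (hτ : ∀ n : ℕ, MeasurableSet {ω | τ ω ≤ (n : ℕ∞)}) :
    MeasurableSet {ω | σ ω < τ ω} := by
  have : {ω | σ ω < τ ω} = ⋃ n : ℕ, ({ω | σ ω = (n : ℕ∞)} ∩ {ω | τ ω ≤ (n : ℕ∞)}ᶜ) := by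
    ext ω
    simp only [Set.mem_setOf_eq, Set.mem_iUnion, Set.mem_inter_iff, Set.mem_compl_iff]
    constructor
    · intro hlt
      have hn : ((σ ω).toNat : ℕ∞) = σ ω := ENat.coe_toNat hlt.ne_top
      exact ⟨(σ ω).toNat, hn.symm, fun hc => lt_irrefl (τ ω) (lt_of_le_of_lt (hn ▸ hc) hlt)⟩
    · rintro ⟨n, hn, hc⟩
      exact hn ▸ lt_of_not_ge hc
  rw [this]
  exact MeasurableSet.iUnion fun n => (fiber_of_le_sets hσ n).inter (hτ n).compl

private lemma meas_eq_set {σ τ : Ω → ℕ∞} (hσ : ∀ n : ℕ, MeasurableSet {ω | σ ω ≤ (n : ℕ∞)})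
    (hτ : ∀ n : ℕ, MeasurableSet {ω | τ ω ≤ (n : ℕ∞)}) :
    MeasurableSet {ω | σ ω = τ ω} := by
  have : {ω | σ ω = τ ω} = ({ω | σ ω < τ ω} ∪ {ω | τ ω < σ ω})ᶜ := by
    ext ω
    simp only [Set.mem_setOf_eq, Set.mem_compl_iff, Set.mem_union, not_or, not_lt]
    constructor
    · intro hl; exact ⟨hl.ge, hl.le⟩
    · rintro ⟨h1, h2⟩; exact le_antisymm h2 h1
  rw [this]
  exact ((meas_lt_set hσ hτ).union (meas_lt_set hτ hσ)).compl

private lemma meas_payoff (f g h : E → ℝ) (hmf : Measurable f) (hmg : Measurable g)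
    (hmh : Measurable h) {σ τ : Ω → ℕ∞}
    (hσ : ∀ n : ℕ, MeasurableSet {ω | σ ω ≤ (n : ℕ∞)})
    (hτ : ∀ n : ℕ, MeasurableSet {ω | τ ω ≤ (n : ℕ∞)}) :
    Measurable (S.payoff f g h σ τ) := by
  have hrw : S.payoff f g h σ τ = fun ω =>
      ({ω | σ ω < τ ω}).indicator (S.disc f σ) ω +
        ({ω | τ ω < σ ω}).indicator (S.disc g τ) ω +
          ({ω | σ ω = τ ω}).indicator (S.disc h σ) ω := by
    funext ω
    simp only [Setup.payoff, Set.indicator_apply, Set.mem_setOf_eq]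
  rw [hrw]
  exact (((meas_disc S hmf hσ).indicator (meas_lt_set hσ hτ)).add
    ((meas_disc S hmg hτ).indicator (meas_lt_set hτ hσ))).add
    ((meas_disc S hmh hσ).indicator (meas_eq_set hσ hτ))

end Meas

/-! ### Integrability infrastructure -/

section Integrability

open scoped ENNReal NNReal

variable (S : Setup E Ω)

private def Wfun (S : Setup E Ω) (f g h : E → ℝ) : Ω → ℝ≥0∞ := fun ω =>
  ⨆ n, ENNReal.ofReal (S.α ^ n * (|f (S.X n ω)| + |g (S.X n ω)| + |h (S.X n ω)|))

private lemma meas_finsup {u : ℕ → Ω → ℝ≥0∞} (hu : ∀ n, Measurable (u n)) (k : ℕ) :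
    Measurable fun ω => (Finset.range (k + 1)).sup fun m => u m ω := by
  induction k with
  | zero => simpa using hu 0
  | succ m ih =>
      have hrw : (fun ω => (Finset.range (m + 2)).sup fun j => u j ω) =
          fun ω => u (m + 1) ω ⊔ (Finset.range (m + 1)).sup fun j => u j ω := by
        funext ω; rw [Finset.range_add_one, Finset.sup_insert]
      rw [hrw]
      exact (hu (m + 1)).sup ih

private lemma sup_piece {φ : E → ℝ} (hφ : Measurable φ)
    (hI : S.KilledSupFin fun y => |φ y|) (x : E) :
    ∫⁻ ω, ⨆ n, ENNReal.ofReal (S.α ^ n * |φ (S.X n ω)|) ∂ S.P x < ⊤ := by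
  have hα0 : 0 ≤ S.α := S.α_pos.le
  set c : ℕ → ℝ≥0∞ := fun k => ENNReal.ofReal ((1 - S.α) * S.α ^ k) with hc
  set s : ℕ → Ω → ℝ≥0∞ :=
    fun k ω => (Finset.range (k + 1)).sup fun m => ENNReal.ofReal |φ (S.X m ω)| with hs
  have hmeass : ∀ k, Measurable (s k) := fun k =>
    meas_finsup (fun n => ((hφ.comp (S.measX n)).abs).ennreal_ofReal) k
  have hpt : ∀ ω, (⨆ n, ENNReal.ofReal (S.α ^ n * |φ (S.X n ω)|)) ≤ ∑' k, c k * s k ω := by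
    intro ω
    refine iSup_le fun n => ?_
    have h1 : ENNReal.ofReal (S.α ^ n * |φ (S.X n ω)|)
        = ENNReal.ofReal (S.α ^ n) * ENNReal.ofReal |φ (S.X n ω)| :=
      ENNReal.ofReal_mul (pow_nonneg hα0 n)
    have hT : ∑' k : ℕ, c (n + k) = ENNReal.ofReal (S.α ^ n) := by
      have hsum : Summable fun k : ℕ => (1 - S.α) * S.α ^ k :=
        (summable_geometric_of_lt_one hα0 S.α_lt_one).mul_left _
      have e1 : ∀ k, c (n + k)
          = ENNReal.ofReal (S.α ^ n) * ENNReal.ofReal ((1 - S.α) * S.α ^ k) := by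
        intro k
        show ENNReal.ofReal ((1 - S.α) * S.α ^ (n + k))
          = ENNReal.ofReal (S.α ^ n) * ENNReal.ofReal ((1 - S.α) * S.α ^ k)
        have hring : (1 - S.α) * S.α ^ (n + k) = S.α ^ n * ((1 - S.α) * S.α ^ k) := by ring
        rw [hring, ENNReal.ofReal_mul (pow_nonneg hα0 n)]
      rw [tsum_congr e1, ENNReal.tsum_mul_left]
      have e2 : ∑' k : ℕ, ENNReal.ofReal ((1 - S.α) * S.α ^ k) = 1 := by
        rw [← ENNReal.ofReal_tsum_of_nonneg
          (fun k => mul_nonneg (by linarith [S.α_lt_one]) (pow_nonneg hα0 k)) hsum]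
        rw [tsum_mul_left, tsum_geometric_of_lt_one hα0 S.α_lt_one,
          mul_inv_cancel₀ (by linarith [S.α_lt_one] : (1 : ℝ) - S.α ≠ 0)]
        exact ENNReal.ofReal_one
      rw [e2, mul_one]
    calc ENNReal.ofReal (S.α ^ n * |φ (S.X n ω)|)
        = (∑' k : ℕ, c (n + k)) * ENNReal.ofReal |φ (S.X n ω)| := by rw [hT, h1]
      _ = ∑' k : ℕ, c (n + k) * ENNReal.ofReal |φ (S.X n ω)| := ENNReal.tsum_mul_right.symm
      _ ≤ ∑' k : ℕ, c (n + k) * s (n + k) ω := by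
          refine ENNReal.tsum_le_tsum fun k => mul_le_mul_right ?_ _
          simp only [hs]
          exact Finset.le_sup (f := fun m => ENNReal.ofReal |φ (S.X m ω)|)
            (Finset.mem_range.mpr (by omega))
      _ ≤ ∑' j : ℕ, c j * s j ω :=
          ENNReal.tsum_comp_le_tsum_of_injective (add_right_injective n) _
  calc ∫⁻ ω, ⨆ n, ENNReal.ofReal (S.α ^ n * |φ (S.X n ω)|) ∂ S.P x
      ≤ ∫⁻ ω, ∑' k, c k * s k ω ∂ S.P x := lintegral_mono hpt
    _ = ∑' k, ∫⁻ ω, c k * s k ω ∂ S.P x :=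
        lintegral_tsum fun k => ((hmeass k).const_mul (c k)).aemeasurable
    _ = ∑' k, c k * ∫⁻ ω, s k ω ∂ S.P x :=
        tsum_congr fun k => lintegral_const_mul (c k) (hmeass k)
    _ < ⊤ := hI x

private lemma lint_W_lt_top {f g h : E → ℝ} (hmf : Measurable f) (hmg : Measurable g)
    (hmh : Measurable h) (hIf : S.KilledSupInt f) (hIg : S.KilledSupInt g)
    (hIh : S.KilledSupInt h) (x : E) : ∫⁻ ω, Wfun S f g h ω ∂ S.P x < ⊤ := by
  have hα0 : 0 ≤ S.α := S.α_pos.le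
  have hb : ∀ ω, Wfun S f g h ω ≤
      (⨆ n, ENNReal.ofReal (S.α ^ n * |f (S.X n ω)|)) +
        (⨆ n, ENNReal.ofReal (S.α ^ n * |g (S.X n ω)|)) +
          (⨆ n, ENNReal.ofReal (S.α ^ n * |h (S.X n ω)|)) := by
    intro ω
    refine iSup_le fun n => ?_
    have hring : S.α ^ n * (|f (S.X n ω)| + |g (S.X n ω)| + |h (S.X n ω)|)
        = S.α ^ n * |f (S.X n ω)| + S.α ^ n * |g (S.X n ω)| + S.α ^ n * |h (S.X n ω)| := by
      ring
    rw [hring]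
    calc ENNReal.ofReal (S.α ^ n * |f (S.X n ω)| + S.α ^ n * |g (S.X n ω)|
          + S.α ^ n * |h (S.X n ω)|)
        ≤ ENNReal.ofReal (S.α ^ n * |f (S.X n ω)|) + ENNReal.ofReal (S.α ^ n * |g (S.X n ω)|)
          + ENNReal.ofReal (S.α ^ n * |h (S.X n ω)|) :=
          le_trans ENNReal.ofReal_add_le (add_le_add_left ENNReal.ofReal_add_le _)
      _ ≤ _ := add_le_add (add_le_add
            (le_iSup (fun m => ENNReal.ofReal (S.α ^ m * |f (S.X m ω)|)) n)
            (le_iSup (fun m => ENNReal.ofReal (S.α ^ m * |g (S.X m ω)|)) n))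
            (le_iSup (fun m => ENNReal.ofReal (S.α ^ m * |h (S.X m ω)|)) n)
  have hmW : ∀ (φ : E → ℝ), Measurable φ →
      Measurable fun ω => ⨆ n, ENNReal.ofReal (S.α ^ n * |φ (S.X n ω)|) := fun φ hφ =>
    Measurable.iSup fun n => (measurable_const.mul ((hφ.comp (S.measX n)).abs)).ennreal_ofReal
  calc ∫⁻ ω, Wfun S f g h ω ∂ S.P x
      ≤ ∫⁻ ω, ((⨆ n, ENNReal.ofReal (S.α ^ n * |f (S.X n ω)|)) +
          (⨆ n, ENNReal.ofReal (S.α ^ n * |g (S.X n ω)|)) +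
            (⨆ n, ENNReal.ofReal (S.α ^ n * |h (S.X n ω)|))) ∂ S.P x := lintegral_mono hb
    _ = (∫⁻ ω, ⨆ n, ENNReal.ofReal (S.α ^ n * |f (S.X n ω)|) ∂ S.P x) +
          (∫⁻ ω, ⨆ n, ENNReal.ofReal (S.α ^ n * |g (S.X n ω)|) ∂ S.P x) +
            (∫⁻ ω, ⨆ n, ENNReal.ofReal (S.α ^ n * |h (S.X n ω)|) ∂ S.P x) := by
        rw [lintegral_add_left (by exact (hmW f hmf).add (hmW g hmg) : Measurable fun ω => (⨆ n, ENNReal.ofReal (S.α ^ n * |f (S.X n ω)|)) + ⨆ n, ENNReal.ofReal (S.α ^ n * |g (S.X n ω)|)),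
          lintegral_add_left (hmW f hmf)]
    _ < ⊤ := by
        exact ENNReal.add_lt_top.mpr
          ⟨ENNReal.add_lt_top.mpr ⟨sup_piece S hmf hIf x, sup_piece S hmg hIg x⟩,
            sup_piece S hmh hIh x⟩

private lemma integrable_of_W {f g h : E → ℝ} {u : Ω → ℝ} {x : E} (hu : Measurable u)
    (hb : ∀ ω, ENNReal.ofReal ‖u ω‖ ≤ Wfun S f g h ω)
    (hfin : ∫⁻ ω, Wfun S f g h ω ∂ S.P x < ⊤) : Integrable u (S.P x) := by
  refine ⟨hu.aestronglyMeasurable, ?_⟩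
  rw [hasFiniteIntegral_iff_norm]
  exact lt_of_le_of_lt (lintegral_mono hb) hfin

private lemma disc_bound {f g h k : E → ℝ}
    (hk : ∀ y, |k y| ≤ |f y| + |g y| + |h y|) (τ : Ω → ℕ∞) (ω : Ω) :
    ENNReal.ofReal ‖S.disc k τ ω‖ ≤ Wfun S f g h ω := by
  have hα0 : 0 ≤ S.α := S.α_pos.le
  rw [Setup.disc]
  split
  next => simp
  next hne =>
    set n := (τ ω).toNat
    calc ENNReal.ofReal ‖S.α ^ n * k (S.X n ω)‖
        ≤ ENNReal.ofReal (S.α ^ n * (|f (S.X n ω)| + |g (S.X n ω)| + |h (S.X n ω)|)) := by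
          refine ENNReal.ofReal_le_ofReal ?_
          rw [Real.norm_eq_abs, abs_mul, abs_pow, abs_of_nonneg hα0]
          exact mul_le_mul_of_nonneg_left (hk _) (pow_nonneg hα0 n)
      _ ≤ Wfun S f g h ω :=
          le_iSup (fun m => ENNReal.ofReal
            (S.α ^ m * (|f (S.X m ω)| + |g (S.X m ω)| + |h (S.X m ω)|))) n

private lemma payoff_eq_cases (f g h : E → ℝ) (σ τ : Ω → ℕ∞) (ω : Ω) :
    (σ ω < τ ω ∧ S.payoff f g h σ τ ω = S.disc f σ ω) ∨
      (τ ω < σ ω ∧ S.payoff f g h σ τ ω = S.disc g τ ω) ∨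
        (σ ω = τ ω ∧ S.payoff f g h σ τ ω = S.disc h σ ω) := by
  rcases lt_trichotomy (σ ω) (τ ω) with hlt | heq | hgt
  · exact Or.inl ⟨hlt, by rw [Setup.payoff, if_pos hlt, if_neg (asymm hlt), if_neg hlt.ne]; ring⟩
  · exact Or.inr (Or.inr ⟨heq, by
      rw [Setup.payoff, if_neg (heq ▸ lt_irrefl _), if_neg (heq ▸ lt_irrefl _), if_pos heq]
      ring⟩)
  · exact Or.inr (Or.inl ⟨hgt, by
      rw [Setup.payoff, if_neg (asymm hgt), if_pos hgt, if_neg hgt.ne']; ring⟩)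

private lemma payoff_bound (f g h : E → ℝ) (σ τ : Ω → ℕ∞) (ω : Ω) :
    ENNReal.ofReal ‖S.payoff f g h σ τ ω‖ ≤ Wfun S f g h ω := by
  have habs_f : ∀ y, |f y| ≤ |f y| + |g y| + |h y| := fun y => by
    linarith [abs_nonneg (g y), abs_nonneg (h y)]
  have habs_g : ∀ y, |g y| ≤ |f y| + |g y| + |h y| := fun y => by
    linarith [abs_nonneg (f y), abs_nonneg (h y)]
  have habs_h : ∀ y, |h y| ≤ |f y| + |g y| + |h y| := fun y => by
    linarith [abs_nonneg (f y), abs_nonneg (g y)]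
  rcases payoff_eq_cases S f g h σ τ ω with ⟨_, hp⟩ | ⟨_, hp⟩ | ⟨_, hp⟩ <;> rw [hp]
  · exact disc_bound S habs_f σ ω
  · exact disc_bound S habs_g τ ω
  · exact disc_bound S habs_h σ ω

private lemma abs_J_le (f g h : E → ℝ) (σ τ : Ω → ℕ∞) (x : E)
    (hfin : ∫⁻ ω, Wfun S f g h ω ∂ S.P x < ⊤) :
    |S.J f g h σ τ x| ≤ (∫⁻ ω, Wfun S f g h ω ∂ S.P x).toReal := by
  rw [Setup.J, ← Real.norm_eq_abs]
  refine (norm_integral_le_lintegral_norm _).trans ?_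
  exact ENNReal.toReal_mono hfin.ne (lintegral_mono fun ω => payoff_bound S f g h σ τ ω)

end Integrability

/-! ### Almost-sure facts and evaluations of `J` -/

section AE

variable (S : Setup E Ω)

private lemma ae_xi (x : E) :
    ∀ᵐ ω ∂ S.P x, ∀ (i : Fin 2) (n : ℕ), 0 < S.ξ i n ω ∧ S.ξ i n ω ≤ 1 := by
  rw [ae_all_iff]
  intro i
  rw [ae_all_iff]
  intro n
  rw [ae_iff]
  have hset : {ω | ¬(0 < S.ξ i n ω ∧ S.ξ i n ω ≤ 1)} = S.ξ i n ⁻¹' (Set.Ioc (0 : ℝ) 1)ᶜ := by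
    ext ω; simp [Set.mem_Ioc]
  rw [hset, ← Measure.map_apply (S.measξ i n) measurableSet_Ioc.compl, S.unif x i n,
    Measure.restrict_apply measurableSet_Ioc.compl]
  have hz : (volume : Measure ℝ) {0} = 0 := Real.volume_singleton
  refine measure_mono_null ?_ hz
  rintro y ⟨hy1, hy2⟩
  simp only [Set.mem_compl_iff, Set.mem_Ioc, not_and, not_le] at hy1
  rcases hy2 with ⟨hy2a, hy2b⟩
  have : ¬ 0 < y := fun hpos => absurd hy2b (not_le.mpr (hy1 hpos))
  have hy0 : y = 0 := le_antisymm (not_lt.mp this) hy2a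
  simp [hy0]

private lemma ae_mrst_eq_zero {p : E → ℝ} {x : E} (hx : p x = 1) (i : Fin 2) :
    ∀ᵐ ω ∂ S.P x, S.mrst i p ω = 0 := by
  filter_upwards [S.init x, ae_xi S x] with ω h0 hξ
  rw [mrst_def]
  apply NInf_eq_zero
  show S.ξ i 0 ω ≤ p (S.X 0 ω)
  rw [h0, hx]
  exact (hξ i 0).2

private lemma ae_mrst_pos {p : E → ℝ} {x : E} (hx : p x = 0) (i : Fin 2) :
    ∀ᵐ ω ∂ S.P x, 0 < S.mrst i p ω := by
  filter_upwards [S.init x, ae_xi S x] with ω h0 hξ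
  rw [mrst_def]
  apply NInf_pos
  show ¬ S.ξ i 0 ω ≤ p (S.X 0 ω)
  rw [h0, hx]
  exact not_le.mpr (hξ i 0).1

private lemma J_eq_const {f g h : E → ℝ} {σ τ : Ω → ℕ∞} {x : E} {c : ℝ}
    (hc : ∀ᵐ ω ∂ S.P x, S.payoff f g h σ τ ω = c) : S.J f g h σ τ x = c := by
  haveI := S.isProb x
  rw [Setup.J, integral_congr_ae (g := fun _ => c) hc]
  simp

private lemma disc_at_zero {k : E → ℝ} {σ : Ω → ℕ∞} {ω : Ω} (h1 : σ ω = 0) :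
    S.disc k σ ω = k (S.X 0 ω) := by
  have : σ ω ≠ ⊤ := by rw [h1]; exact fun hc => by simp at hc
  rw [Setup.disc, if_neg this, h1]
  simp

private lemma payoff_zero_zero {f g h : E → ℝ} {σ τ : Ω → ℕ∞} {ω : Ω}
    (h1 : σ ω = 0) (h2 : τ ω = 0) : S.payoff f g h σ τ ω = h (S.X 0 ω) := by
  rw [Setup.payoff, if_neg (by rw [h1, h2]; exact lt_irrefl _),
    if_neg (by rw [h1, h2]; exact lt_irrefl _), if_pos (by rw [h1, h2]),
    disc_at_zero S h1]
  ring

private lemma payoff_opp_top (f g h : E → ℝ) (σ : Ω → ℕ∞) (ω : Ω) :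
    S.payoff f g h σ (fun _ => ⊤) ω = S.disc f σ ω := by
  rcases eq_or_ne (σ ω) ⊤ with htop | hne
  · rw [Setup.payoff]
    have hd1 : S.disc f σ ω = 0 := by rw [Setup.disc, if_pos htop]
    have hd2 : S.disc h σ ω = 0 := by rw [Setup.disc, if_pos htop]
    simp [htop, hd1, hd2]
  · rw [Setup.payoff]
    have hlt : σ ω < (fun _ : Ω => (⊤ : ℕ∞)) ω := lt_of_le_of_ne le_top hne
    rw [if_pos hlt, if_neg (asymm hlt), if_neg hlt.ne]
    ring

private lemma payoff_self_top (f g h : E → ℝ) (τ : Ω → ℕ∞) (ω : Ω) :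
    S.payoff f g h (fun _ => ⊤) τ ω = S.disc g τ ω := by
  rcases eq_or_ne (τ ω) ⊤ with htop | hne
  · rw [Setup.payoff]
    have hd1 : S.disc g τ ω = 0 := by rw [Setup.disc, if_pos htop]
    have hd2 : S.disc h (fun _ : Ω => (⊤ : ℕ∞)) ω = 0 := by rw [Setup.disc, if_pos rfl]
    simp only [htop, lt_irrefl, if_false, hd1, hd2]
    simp
  · rw [Setup.payoff]
    have hlt : τ ω < (fun _ : Ω => (⊤ : ℕ∞)) ω := lt_of_le_of_ne le_top hne
    rw [if_neg (asymm hlt), if_pos hlt, if_neg hlt.ne']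
    ring

private lemma payoff_pos_zero {f g h : E → ℝ} {σ τ : Ω → ℕ∞} {ω : Ω}
    (h1 : 0 < σ ω) (h2 : τ ω = 0) : S.payoff f g h σ τ ω = g (S.X 0 ω) := by
  rw [Setup.payoff, if_neg (by rw [h2]; exact fun hc => absurd (lt_of_lt_of_le h1 hc.le) (lt_irrefl _)),
    if_pos (by rw [h2]; exact h1), if_neg (by rw [h2]; exact h1.ne'), disc_at_zero S h2]
  ring

private lemma payoff_zero_pos {f g h : E → ℝ} {σ τ : Ω → ℕ∞} {ω : Ω}
    (h1 : σ ω = 0) (h2 : 0 < τ ω) : S.payoff f g h σ τ ω = f (S.X 0 ω) := by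
  rw [Setup.payoff, if_pos (by rw [h1]; exact h2),
    if_neg (by rw [h1]; exact fun hc => absurd (lt_of_lt_of_le h2 hc.le) (lt_irrefl _)),
    if_neg (by rw [h1]; exact h2.ne), disc_at_zero S h1]
  ring

private lemma J_both_zero {f g h : E → ℝ} {σ τ : Ω → ℕ∞} {x : E}
    (hσ : ∀ᵐ ω ∂ S.P x, σ ω = 0) (hτ : ∀ᵐ ω ∂ S.P x, τ ω = 0) :
    S.J f g h σ τ x = h x :=
  J_eq_const S (by
    filter_upwards [hσ, hτ, S.init x] with ω h1 h2 h0
    rw [payoff_zero_zero S h1 h2, h0])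

private lemma J_opp_top {f g h : E → ℝ} {σ : Ω → ℕ∞} {x : E}
    (hσ : ∀ᵐ ω ∂ S.P x, σ ω = 0) : S.J f g h σ (fun _ => ⊤) x = f x :=
  J_eq_const S (by
    filter_upwards [hσ, S.init x] with ω h1 h0
    rw [payoff_opp_top S f g h σ ω, disc_at_zero S h1, h0])

private lemma J_self_top {f g h : E → ℝ} {τ : Ω → ℕ∞} {x : E}
    (hτ : ∀ᵐ ω ∂ S.P x, τ ω = 0) : S.J f g h (fun _ => ⊤) τ x = g x :=
  J_eq_const S (by
    filter_upwards [hτ, S.init x] with ω h1 h0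
    rw [payoff_self_top S f g h τ ω, disc_at_zero S h1, h0])

private lemma J_pos_zero {f g h : E → ℝ} {σ τ : Ω → ℕ∞} {x : E}
    (hσ : ∀ᵐ ω ∂ S.P x, 0 < σ ω) (hτ : ∀ᵐ ω ∂ S.P x, τ ω = 0) :
    S.J f g h σ τ x = g x :=
  J_eq_const S (by
    filter_upwards [hσ, hτ, S.init x] with ω h1 h2 h0
    rw [payoff_pos_zero S h1 h2, h0])

private lemma J_zero_pos {f g h : E → ℝ} {σ τ : Ω → ℕ∞} {x : E}
    (hσ : ∀ᵐ ω ∂ S.P x, σ ω = 0) (hτ : ∀ᵐ ω ∂ S.P x, 0 < τ ω) :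
    S.J f g h σ τ x = f x :=
  J_eq_const S (by
    filter_upwards [hσ, hτ, S.init x] with ω h1 h2 h0
    rw [payoff_zero_pos S h1 h2, h0])

end AE

/-! ### The key comparison lemmas -/

section Comparison

variable (S : Setup E Ω)

private lemma compare_A {f g h : E → ℝ} (hmf : Measurable f) (hmg : Measurable g)
    (hmh : Measurable h) (hIf : S.KilledSupInt f) (hIg : S.KilledSupInt g)
    (hIh : S.KilledSupInt h) {q₂ : E → ℝ} (hq₂m : Measurable q₂) (hpure : IsPure q₂)
    (hMq : ∀ y, max (f y) (g y) < h y → q₂ y = 0) {τ : Ω → ℕ∞} (hadm : τ ∈ S.Adm 0)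
    (hcon : ∀ ω, τ ω ≤ S.exitTime {x : E | max (f x) (g x) < h x} ω) (x : E) :
    ∫ ω, S.disc (fun y => if max (f y) (g y) < h y then f y else min (f y) (h y)) τ ω ∂ S.P x
      ≤ S.J f g h τ (S.mrst 1 q₂) x := by
  set k₁ : E → ℝ := fun y => if max (f y) (g y) < h y then f y else min (f y) (h y) with hk₁
  have hα0 : 0 ≤ S.α := S.α_pos.le
  have hfin := lint_W_lt_top S hmf hmg hmh hIf hIg hIh x
  have hmk₁ : Measurable k₁ :=
    Measurable.ite (measurableSet_lt (hmf.max hmg) hmh) hmf (hmf.min hmh)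
  have hkb : ∀ y, |k₁ y| ≤ |f y| + |g y| + |h y| := by
    intro y
    rw [hk₁]
    dsimp only
    split
    · linarith [abs_nonneg (g y), abs_nonneg (h y)]
    · rcases min_cases (f y) (h y) with ⟨hmin, _⟩ | ⟨hmin, _⟩ <;> rw [hmin]
      · linarith [abs_nonneg (g y), abs_nonneg (h y)]
      · linarith [abs_nonneg (f y), abs_nonneg (g y)]
  have hτle : ∀ n : ℕ, MeasurableSet {ω | τ ω ≤ (n : ℕ∞)} := adm_le_sets S hadm
  have hσle : ∀ n : ℕ, MeasurableSet {ω | S.mrst 1 q₂ ω ≤ (n : ℕ∞)} := mrst_le_sets S hq₂m 1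
  have hint1 : Integrable (S.disc k₁ τ) (S.P x) :=
    integrable_of_W S (meas_disc S hmk₁ hτle) (fun ω => disc_bound S hkb τ ω) hfin
  have hint2 : Integrable (S.payoff f g h τ (S.mrst 1 q₂)) (S.P x) :=
    integrable_of_W S (meas_payoff S f g h hmf hmg hmh hτle hσle)
      (fun ω => payoff_bound S f g h _ _ ω) hfin
  rw [Setup.J]
  refine integral_mono_ae hint1 hint2 ?_
  filter_upwards [ae_xi S x] with ω hξ
  have hsub : {n : ℕ | S.ξ 1 n ω ≤ q₂ (S.X n ω)} ⊆
      {n : ℕ | S.X n ω ∉ {x : E | max (f x) (g x) < h x}} := by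
    intro n hn
    simp only [Set.mem_setOf_eq] at hn ⊢
    intro hmem
    rw [hMq _ hmem] at hn
    exact absurd hn (not_le.mpr (hξ 1 n).1)
  have hes : S.exitTime {x : E | max (f x) (g x) < h x} ω ≤ S.mrst 1 q₂ ω := by
    rw [exitTime_def, mrst_def]
    exact NInf_mono hsub
  have hts : τ ω ≤ S.mrst 1 q₂ ω := (hcon ω).trans hes
  rcases eq_or_ne (τ ω) ⊤ with htop | hne
  · have hstop : S.mrst 1 q₂ ω = ⊤ := le_antisymm le_top (htop ▸ hts)
    have hd : S.disc k₁ τ ω = 0 := by rw [Setup.disc, if_pos htop]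
    rcases payoff_eq_cases S f g h τ (S.mrst 1 q₂) ω with ⟨hl, _⟩ | ⟨hl, _⟩ | ⟨_, hp⟩
    · exact absurd (htop ▸ hl) not_top_lt
    · exact absurd (hstop ▸ hl) not_top_lt
    · rw [hp, hd, Setup.disc, if_pos htop]
  · set n := (τ ω).toNat with hndef
    have hn : ((n : ℕ) : ℕ∞) = τ ω := ENat.coe_toNat hne
    have hd : S.disc k₁ τ ω = S.α ^ n * k₁ (S.X n ω) := by rw [Setup.disc, if_neg hne]
    rcases eq_or_ne (S.mrst 1 q₂ ω) (τ ω) with heq | hneq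
    · -- the opponent stops at the same (exit) time; payoff is `h`
      have hmem : n ∈ {m : ℕ | S.ξ 1 m ω ≤ q₂ (S.X m ω)} :=
        NInf_eq_coe (by rw [← mrst_def S 1 q₂ ω, heq, ← hn])
      have hq1 : q₂ (S.X n ω) = 1 := by
        rcases hpure (S.X n ω) with h0 | h1
        · exfalso
          have hle : S.ξ 1 n ω ≤ q₂ (S.X n ω) := hmem
          rw [h0] at hle
          exact absurd hle (not_le.mpr (hξ 1 n).1)
        · exact h1
      have hnotM : ¬ max (f (S.X n ω)) (g (S.X n ω)) < h (S.X n ω) := by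
        intro hc
        rw [hMq _ hc] at hq1
        norm_num at hq1
      have hk₁v : k₁ (S.X n ω) ≤ h (S.X n ω) := by
        rw [hk₁]
        dsimp only
        rw [if_neg hnotM]
        exact min_le_right _ _
      rcases payoff_eq_cases S f g h τ (S.mrst 1 q₂) ω with ⟨hl, _⟩ | ⟨hl, _⟩ | ⟨_, hp⟩
      · exact absurd hl (heq ▸ lt_irrefl _)
      · exact absurd hl (heq ▸ lt_irrefl _)
      · rw [hp, hd, Setup.disc, if_neg hne]
        exact mul_le_mul_of_nonneg_left hk₁v (pow_nonneg hα0 n)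
    · -- the opponent stops strictly later; payoff is `f`
      have hlt : τ ω < S.mrst 1 q₂ ω := lt_of_le_of_ne hts (fun hc => hneq hc.symm)
      have hk₁v : k₁ (S.X n ω) ≤ f (S.X n ω) := by
        rw [hk₁]
        dsimp only
        split
        · exact le_refl _
        · exact min_le_left _ _
      rcases payoff_eq_cases S f g h τ (S.mrst 1 q₂) ω with ⟨_, hp⟩ | ⟨hl, _⟩ | ⟨hl, _⟩
      · rw [hp, hd, Setup.disc, if_neg hne]
        exact mul_le_mul_of_nonneg_left hk₁v (pow_nonneg hα0 n)
      · exact absurd hl (not_lt.mpr hts)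
      · exact absurd hl (ne_of_lt hlt)
  
private lemma compare_B {f g h : E → ℝ} (hmf : Measurable f) (hmg : Measurable g)
    (hmh : Measurable h) (hIf : S.KilledSupInt f) (hIg : S.KilledSupInt g)
    (hIh : S.KilledSupInt h) {q₁ : E → ℝ} (hq₁m : Measurable q₁) (hpure : IsPure q₁)
    (hMq : ∀ y, h y < min (f y) (g y) → q₁ y = 0) {τ : Ω → ℕ∞} (hadm : τ ∈ S.Adm 1)
    (hcon : ∀ ω, τ ω ≤ S.exitTime {x : E | h x < min (f x) (g x)} ω) (x : E) :
    S.J f g h (S.mrst 0 q₁) τ x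
      ≤ ∫ ω, S.disc (fun y => if h y < min (f y) (g y) then g y else max (g y) (h y)) τ ω ∂ S.P x := by
  set k₂ : E → ℝ := fun y => if h y < min (f y) (g y) then g y else max (g y) (h y) with hk₂
  have hα0 : 0 ≤ S.α := S.α_pos.le
  have hfin := lint_W_lt_top S hmf hmg hmh hIf hIg hIh x
  have hmk₂ : Measurable k₂ :=
    Measurable.ite (measurableSet_lt hmh (hmf.min hmg)) hmg (hmg.max hmh)
  have hkb : ∀ y, |k₂ y| ≤ |f y| + |g y| + |h y| := by
    intro y
    rw [hk₂]
    dsimp only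
    split
    · linarith [abs_nonneg (f y), abs_nonneg (h y)]
    · rcases max_cases (g y) (h y) with ⟨hmax, _⟩ | ⟨hmax, _⟩ <;> rw [hmax]
      · linarith [abs_nonneg (f y), abs_nonneg (h y)]
      · linarith [abs_nonneg (f y), abs_nonneg (g y)]
  have hτle : ∀ n : ℕ, MeasurableSet {ω | τ ω ≤ (n : ℕ∞)} := adm_le_sets S hadm
  have hσle : ∀ n : ℕ, MeasurableSet {ω | S.mrst 0 q₁ ω ≤ (n : ℕ∞)} := mrst_le_sets S hq₁m 0
  have hint1 : Integrable (S.payoff f g h (S.mrst 0 q₁) τ) (S.P x) :=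
    integrable_of_W S (meas_payoff S f g h hmf hmg hmh hσle hτle)
      (fun ω => payoff_bound S f g h _ _ ω) hfin
  have hint2 : Integrable (S.disc k₂ τ) (S.P x) :=
    integrable_of_W S (meas_disc S hmk₂ hτle) (fun ω => disc_bound S hkb τ ω) hfin
  rw [Setup.J]
  refine integral_mono_ae hint1 hint2 ?_
  filter_upwards [ae_xi S x] with ω hξ
  have hsub : {n : ℕ | S.ξ 0 n ω ≤ q₁ (S.X n ω)} ⊆
      {n : ℕ | S.X n ω ∉ {x : E | h x < min (f x) (g x)}} := by
    intro n hn
    simp only [Set.mem_setOf_eq] at hn ⊢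
    intro hmem
    rw [hMq _ hmem] at hn
    exact absurd hn (not_le.mpr (hξ 0 n).1)
  have hes : S.exitTime {x : E | h x < min (f x) (g x)} ω ≤ S.mrst 0 q₁ ω := by
    rw [exitTime_def, mrst_def]
    exact NInf_mono hsub
  have hts : τ ω ≤ S.mrst 0 q₁ ω := (hcon ω).trans hes
  rcases eq_or_ne (τ ω) ⊤ with htop | hne
  · have hstop : S.mrst 0 q₁ ω = ⊤ := le_antisymm le_top (htop ▸ hts)
    have hd : S.disc k₂ τ ω = 0 := by rw [Setup.disc, if_pos htop]
    rcases payoff_eq_cases S f g h (S.mrst 0 q₁) τ ω with ⟨hl, _⟩ | ⟨hl, _⟩ | ⟨_, hp⟩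
    · exact absurd (hstop ▸ hl) not_top_lt
    · exact absurd (htop ▸ hl) not_top_lt
    · rw [hp, hd, Setup.disc, if_pos hstop]
  · set n := (τ ω).toNat with hndef
    have hn : ((n : ℕ) : ℕ∞) = τ ω := ENat.coe_toNat hne
    have hd : S.disc k₂ τ ω = S.α ^ n * k₂ (S.X n ω) := by rw [Setup.disc, if_neg hne]
    rcases eq_or_ne (S.mrst 0 q₁ ω) (τ ω) with heq | hneq
    · -- player 1 stops at the same (exit) time; payoff is `h`
      have hmem : n ∈ {m : ℕ | S.ξ 0 m ω ≤ q₁ (S.X m ω)} :=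
        NInf_eq_coe (by rw [← mrst_def S 0 q₁ ω, heq, ← hn])
      have hq1 : q₁ (S.X n ω) = 1 := by
        rcases hpure (S.X n ω) with h0 | h1
        · exfalso
          have hle : S.ξ 0 n ω ≤ q₁ (S.X n ω) := hmem
          rw [h0] at hle
          exact absurd hle (not_le.mpr (hξ 0 n).1)
        · exact h1
      have hnotM : ¬ h (S.X n ω) < min (f (S.X n ω)) (g (S.X n ω)) := by
        intro hc
        rw [hMq _ hc] at hq1
        norm_num at hq1
      have hk₂v : h (S.X n ω) ≤ k₂ (S.X n ω) := by
        rw [hk₂]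
        dsimp only
        rw [if_neg hnotM]
        exact le_max_right _ _
      rcases payoff_eq_cases S f g h (S.mrst 0 q₁) τ ω with ⟨hl, _⟩ | ⟨hl, _⟩ | ⟨heq2, hp⟩
      · exact absurd hl (heq ▸ lt_irrefl _)
      · exact absurd hl (heq ▸ lt_irrefl _)
      · rw [hp, hd, Setup.disc, heq, if_neg hne]
        exact mul_le_mul_of_nonneg_left hk₂v (pow_nonneg hα0 n)
    · -- player 1 stops strictly later; payoff is `g`
      have hlt : τ ω < S.mrst 0 q₁ ω := lt_of_le_of_ne hts (fun hc => hneq hc.symm)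
      have hk₂v : g (S.X n ω) ≤ k₂ (S.X n ω) := by
        rw [hk₂]
        dsimp only
        split
        · exact le_refl _
        · exact le_max_left _ _
      rcases payoff_eq_cases S f g h (S.mrst 0 q₁) τ ω with ⟨hl, _⟩ | ⟨_, hp⟩ | ⟨hl, _⟩
      · exact absurd hl (not_lt.mpr hts)
      · rw [hp, hd, Setup.disc, if_neg hne]
        exact mul_le_mul_of_nonneg_left hk₂v (pow_nonneg hα0 n)
      · exact absurd hl.symm (ne_of_lt hlt)

end Comparison
/-- Sufficient conditions for the non-existence of pure equilibria of the zero-sum game,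
in terms of the sets `M₁ = {f ∨ g < h}`, `M₂ = {h < f ∧ g}` and the associated constrained
optimal stopping problems. -/
theorem statement12 (S : Setup E Ω) (f g h : E → ℝ)
    (hmf : Measurable f) (hmg : Measurable g) (hmh : Measurable h)
    (hIf : S.KilledSupInt f) (hIg : S.KilledSupInt g) (hIh : S.KilledSupInt h) :
    (∀ x₀ : E, x₀ ∈ {x : E | max (f x) (g x) < h x} →
      max (f x₀) (g x₀) <
        S.conSup 0 (fun x => if max (f x) (g x) < h x then f x else min (f x) (h x))
          {x : E | max (f x) (g x) < h x} x₀ →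
      ¬ ∃ q₁ q₂ : E → ℝ, IsPure q₁ ∧ IsPure q₂ ∧ S.IsZSEq f g h q₁ q₂) ∧
    (∀ x₀ : E, x₀ ∈ {x : E | h x < min (f x) (g x)} →
      S.conInf 1 (fun x => if h x < min (f x) (g x) then g x else max (g x) (h x))
          {x : E | h x < min (f x) (g x)} x₀ < min (f x₀) (g x₀) →
      ¬ ∃ q₁ q₂ : E → ℝ, IsPure q₁ ∧ IsPure q₂ ∧ S.IsZSEq f g h q₁ q₂) := by
  have hfinW : ∀ x, ∫⁻ ω, Wfun S f g h ω ∂ S.P x < ⊤ := fun x =>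
    lint_W_lt_top S hmf hmg hmh hIf hIg hIh x
  have hbddA : ∀ (x : E) (τ₂ : Ω → ℕ∞),
      BddAbove (Set.range fun σ : S.Adm 0 => S.J f g h σ.1 τ₂ x) := by
    intro x τ₂
    refine ⟨(∫⁻ ω, Wfun S f g h ω ∂ S.P x).toReal, ?_⟩
    rintro v ⟨σ, rfl⟩
    exact (abs_le.mp (abs_J_le S f g h σ.1 τ₂ x (hfinW x))).2
  have hbddB : ∀ (x : E) (τ₁ : Ω → ℕ∞),
      BddBelow (Set.range fun σ : S.Adm 1 => S.J f g h τ₁ σ.1 x) := by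
    intro x τ₁
    refine ⟨-(∫⁻ ω, Wfun S f g h ω ∂ S.P x).toReal, ?_⟩
    rintro v ⟨σ, rfl⟩
    exact (abs_le.mp (abs_J_le S f g h τ₁ σ.1 x (hfinW x))).1
  constructor
  · -- Part (A)
    rintro x₀ hx₀ hval ⟨q₁, q₂, hp1, hp2, hs1, hs2, hJx⟩
    -- Step 1: in equilibrium, player 2 never stops on M₁
    have hq₂M : ∀ y, max (f y) (g y) < h y → q₂ y = 0 := by
      intro y hy
      rcases hp2 y with h0 | h1
      · exact h0
      exfalso
      obtain ⟨e1, e2⟩ := hJx y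
      rcases hp1 y with hq10 | hq11
      · have hv : S.J f g h (S.mrst 0 q₁) (S.mrst 1 q₂) y = g y :=
          J_pos_zero S (ae_mrst_pos S hq10 0) (ae_mrst_eq_zero S h1 1)
        have hdev : S.J f g h (fun _ => (0 : ℕ∞)) (S.mrst 1 q₂) y = h y :=
          J_both_zero S (ae_of_all _ fun ω => rfl) (ae_mrst_eq_zero S h1 1)
        have hle : S.J f g h (fun _ => (0 : ℕ∞)) (S.mrst 1 q₂) y ≤
            ⨆ σ : S.Adm 0, S.J f g h σ.1 (S.mrst 1 q₂) y :=
          le_ciSup (hbddA y _) ⟨fun _ => (0 : ℕ∞), const_mem_adm S 0 0⟩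
        rw [hdev, ← e1, hv] at hle
        have hgy : g y < h y := lt_of_le_of_lt (le_max_right _ _) hy
        linarith
      · have hv : S.J f g h (S.mrst 0 q₁) (S.mrst 1 q₂) y = h y :=
          J_both_zero S (ae_mrst_eq_zero S hq11 0) (ae_mrst_eq_zero S h1 1)
        have hdev : S.J f g h (S.mrst 0 q₁) (fun _ => (⊤ : ℕ∞)) y = f y :=
          J_opp_top S (ae_mrst_eq_zero S hq11 0)
        have hge : (⨅ σ : S.Adm 1, S.J f g h (S.mrst 0 q₁) σ.1 y) ≤
            S.J f g h (S.mrst 0 q₁) (fun _ => (⊤ : ℕ∞)) y :=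
          ciInf_le (hbddB y _) ⟨fun _ => (⊤ : ℕ∞), const_mem_adm S 1 ⊤⟩
        rw [hdev, ← e2, hv] at hge
        have hfy : f y < h y := lt_of_le_of_lt (le_max_left _ _) hy
        linarith
    obtain ⟨e1, e2⟩ := hJx x₀
    -- Step 2a: the equilibrium value is at most `max (f x₀) (g x₀)`
    have hub : S.J f g h (S.mrst 0 q₁) (S.mrst 1 q₂) x₀ ≤ max (f x₀) (g x₀) := by
      rcases hp1 x₀ with hq10 | hq11
      · have hdev : S.J f g h (S.mrst 0 q₁) (fun _ => (0 : ℕ∞)) x₀ = g x₀ :=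
          J_pos_zero S (ae_mrst_pos S hq10 0) (ae_of_all _ fun ω => rfl)
        have hge := ciInf_le (hbddB x₀ (S.mrst 0 q₁)) ⟨fun _ => (0 : ℕ∞), const_mem_adm S 1 0⟩
        rw [hdev, ← e2] at hge
        exact hge.trans (le_max_right _ _)
      · have hdev : S.J f g h (S.mrst 0 q₁) (fun _ => (⊤ : ℕ∞)) x₀ = f x₀ :=
          J_opp_top S (ae_mrst_eq_zero S hq11 0)
        have hge := ciInf_le (hbddB x₀ (S.mrst 0 q₁)) ⟨fun _ => (⊤ : ℕ∞), const_mem_adm S 1 ⊤⟩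
        rw [hdev, ← e2] at hge
        exact hge.trans (le_max_left _ _)
    -- Step 2b: the equilibrium value is at least the constrained optimal stopping value
    have hlb : S.conSup 0 (fun x => if max (f x) (g x) < h x then f x else min (f x) (h x))
        {x : E | max (f x) (g x) < h x} x₀ ≤ S.J f g h (S.mrst 0 q₁) (S.mrst 1 q₂) x₀ := by
      rw [Setup.conSup]
      haveI : Nonempty {τ : Ω → ℕ∞ // τ ∈ S.Adm 0 ∧
          ∀ ω, τ ω ≤ S.exitTime {x : E | max (f x) (g x) < h x} ω} :=
        ⟨⟨fun _ => 0, const_mem_adm S 0 0, fun ω => zero_le⟩⟩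
      refine ciSup_le ?_
      rintro ⟨τ, hadm, hcon⟩
      have h1 := compare_A S hmf hmg hmh hIf hIg hIh hs2.1 hp2 hq₂M hadm hcon x₀
      have h2 : S.J f g h τ (S.mrst 1 q₂) x₀ ≤
          ⨆ σ : S.Adm 0, S.J f g h σ.1 (S.mrst 1 q₂) x₀ :=
        le_ciSup (hbddA x₀ _) ⟨τ, hadm⟩
      rw [← e1] at h2
      exact h1.trans h2
    linarith
  · -- Part (B)
    rintro x₀ hx₀ hval ⟨q₁, q₂, hp1, hp2, hs1, hs2, hJx⟩
    -- Step 1: in equilibrium, player 1 never stops on M₂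
    have hq₁M : ∀ y, h y < min (f y) (g y) → q₁ y = 0 := by
      intro y hy
      rcases hp1 y with h0 | h1
      · exact h0
      exfalso
      obtain ⟨e1, e2⟩ := hJx y
      rcases hp2 y with hq20 | hq21
      · have hv : S.J f g h (S.mrst 0 q₁) (S.mrst 1 q₂) y = f y :=
          J_zero_pos S (ae_mrst_eq_zero S h1 0) (ae_mrst_pos S hq20 1)
        have hdev : S.J f g h (S.mrst 0 q₁) (fun _ => (0 : ℕ∞)) y = h y :=
          J_both_zero S (ae_mrst_eq_zero S h1 0) (ae_of_all _ fun ω => rfl)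
        have hge : (⨅ σ : S.Adm 1, S.J f g h (S.mrst 0 q₁) σ.1 y) ≤
            S.J f g h (S.mrst 0 q₁) (fun _ => (0 : ℕ∞)) y :=
          ciInf_le (hbddB y _) ⟨fun _ => (0 : ℕ∞), const_mem_adm S 1 0⟩
        rw [hdev, ← e2, hv] at hge
        have hfy : h y < f y := lt_of_lt_of_le hy (min_le_left _ _)
        linarith
      · have hv : S.J f g h (S.mrst 0 q₁) (S.mrst 1 q₂) y = h y :=
          J_both_zero S (ae_mrst_eq_zero S h1 0) (ae_mrst_eq_zero S hq21 1)
        have hdev : S.J f g h (fun _ => (⊤ : ℕ∞)) (S.mrst 1 q₂) y = g y :=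
          J_self_top S (ae_mrst_eq_zero S hq21 1)
        have hle : S.J f g h (fun _ => (⊤ : ℕ∞)) (S.mrst 1 q₂) y ≤
            ⨆ σ : S.Adm 0, S.J f g h σ.1 (S.mrst 1 q₂) y :=
          le_ciSup (hbddA y _) ⟨fun _ => (⊤ : ℕ∞), const_mem_adm S 0 ⊤⟩
        rw [hdev, ← e1, hv] at hle
        have hgy : h y < g y := lt_of_lt_of_le hy (min_le_right _ _)
        linarith
    obtain ⟨e1, e2⟩ := hJx x₀
    -- Step 2a: the equilibrium value is at least `min (f x₀) (g x₀)`
    have hub : min (f x₀) (g x₀) ≤ S.J f g h (S.mrst 0 q₁) (S.mrst 1 q₂) x₀ := by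
      rcases hp2 x₀ with hq20 | hq21
      · have hdev : S.J f g h (fun _ => (0 : ℕ∞)) (S.mrst 1 q₂) x₀ = f x₀ :=
          J_zero_pos S (ae_of_all _ fun ω => rfl) (ae_mrst_pos S hq20 1)
        have hle := le_ciSup (hbddA x₀ (S.mrst 1 q₂)) ⟨fun _ => (0 : ℕ∞), const_mem_adm S 0 0⟩
        rw [hdev, ← e1] at hle
        exact (min_le_left _ _).trans hle
      · have hdev : S.J f g h (fun _ => (⊤ : ℕ∞)) (S.mrst 1 q₂) x₀ = g x₀ :=
          J_self_top S (ae_mrst_eq_zero S hq21 1)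
        have hle := le_ciSup (hbddA x₀ (S.mrst 1 q₂)) ⟨fun _ => (⊤ : ℕ∞), const_mem_adm S 0 ⊤⟩
        rw [hdev, ← e1] at hle
        exact (min_le_right _ _).trans hle
    -- Step 2b: the equilibrium value is at most the constrained optimal stopping value
    have hlb : S.J f g h (S.mrst 0 q₁) (S.mrst 1 q₂) x₀ ≤
        S.conInf 1 (fun x => if h x < min (f x) (g x) then g x else max (g x) (h x))
          {x : E | h x < min (f x) (g x)} x₀ := by
      rw [Setup.conInf]
      haveI : Nonempty {τ : Ω → ℕ∞ // τ ∈ S.Adm 1 ∧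
          ∀ ω, τ ω ≤ S.exitTime {x : E | h x < min (f x) (g x)} ω} :=
        ⟨⟨fun _ => 0, const_mem_adm S 1 0, fun ω => zero_le⟩⟩
      refine le_ciInf ?_
      rintro ⟨τ, hadm, hcon⟩
      have h1 := compare_B S hmf hmg hmh hIf hIg hIh hs1.1 hp1 hq₁M hadm hcon x₀
      have h2 : (⨅ σ : S.Adm 1, S.J f g h (S.mrst 0 q₁) σ.1 x₀) ≤
          S.J f g h (S.mrst 0 q₁) τ x₀ :=
        ciInf_le (hbddB x₀ _) ⟨τ, hadm⟩
      rw [← e2] at h2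
      exact h2.trans h1
    linarith

end DynkinGame
end
end
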